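/- The function K(u,v) = −4/(u−v)⁴, defined for u ≠ v, satisfies the natural equation of minimal Lorentz surfaces: √|K| · ∂²/∂u∂v ( ln √|K| ) = K. -/

import Mathlib

/-- Partial derivative with respect to the first variable. -/
noncomputable def pderivU (f : ℝ → ℝ → ℝ) (u v : ℝ) : ℝ := deriv (fun t => f t v) u

/-- Partial derivative with respect to the second variable. -/
noncomputable def pderivV (f : ℝ → ℝ → ℝ) (u v : ℝ) : ℝ := deriv (fun t => f u t) v

/-- Mixed second partial derivative ∂²/∂u∂v. -/
noncomputable def pderivUV (f : ℝ → ℝ → ℝ) (u v : ℝ) : ℝ := pderivV (pderivU f) u v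

/-- K(u,v) = −4/(u−v)⁴. -/
noncomputable def Kfun (u v : ℝ) : ℝ := -4 / (u - v)^4

lemma sqrt_abs_K (s t : ℝ) (h : s ≠ t) :
    Real.sqrt |Kfun s t| = 2 / (s - t)^2 := by
  have hst : s - t ≠ 0 := sub_ne_zero.mpr h
  have h4 : (0:ℝ) < (s - t)^4 := by positivity
  have habs : |Kfun s t| = (2 / (s - t)^2)^2 := by
    rw [Kfun, abs_div, abs_of_pos h4]
    rw [abs_of_nonpos (by norm_num : (-4:ℝ) ≤ 0)]
    field_simp
    ring
  rw [habs, Real.sqrt_sq (by positivity)]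

lemma log_sqrt_abs_K (s t : ℝ) (h : s ≠ t) :
    Real.log (Real.sqrt |Kfun s t|) = Real.log 2 - 2 * Real.log (s - t) := by
  have hst : s - t ≠ 0 := sub_ne_zero.mpr h
  rw [sqrt_abs_K s t h, Real.log_div (by norm_num) (pow_ne_zero 2 hst), Real.log_pow]
  push_cast
  ring

lemma inner_deriv (t u : ℝ) (h : u ≠ t) :
    pderivU (fun a b => Real.log (Real.sqrt |Kfun a b|)) u t = -2 * (u - t)⁻¹ := by
  have hEq : (fun s => Real.log (Real.sqrt |Kfun s t|)) =ᶠ[nhds u]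
      (fun s => Real.log 2 - 2 * Real.log (s - t)) := by
    filter_upwards [isOpen_ne.mem_nhds h] with s hs
    exact log_sqrt_abs_K s t hs
  have hd : HasDerivAt (fun s => Real.log 2 - 2 * Real.log (s - t))
      (-2 * (u - t)⁻¹) u := by
    have h1 : HasDerivAt (fun s : ℝ => s - t) 1 u := (hasDerivAt_id u).sub_const t
    have h2 := h1.log (sub_ne_zero.mpr h)
    have := (h2.const_mul (2:ℝ)).const_sub (Real.log 2)
    convert this using 1
    · rfl
    · rfl
    · ring
  rw [pderivU, hEq.deriv_eq, hd.deriv]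

theorem stmt1 (u v : ℝ) (h : u ≠ v) :
    Real.sqrt |Kfun u v| *
      pderivUV (fun a b => Real.log (Real.sqrt |Kfun a b|)) u v = Kfun u v := by
  have huv : u - v ≠ 0 := sub_ne_zero.mpr h
  have hEq : (fun t => pderivU (fun a b => Real.log (Real.sqrt |Kfun a b|)) u t)
      =ᶠ[nhds v] (fun t => -2 * (u - t)⁻¹) := by
    filter_upwards [isOpen_ne.mem_nhds (Ne.symm h : v ≠ u)] with t ht
    exact inner_deriv t u (Ne.symm ht)
  have hd : HasDerivAt (fun t => -2 * (u - t)⁻¹) (-2 / (u - v)^2) v := by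
    have h1 : HasDerivAt (fun t : ℝ => u - t) (-1) v := by
      simpa using (hasDerivAt_id v).const_sub u
    have h2 := h1.inv huv
    have := h2.const_mul (-2 : ℝ)
    convert this using 1
    · rfl
    · rfl
    · rfl
    · ring
  have hmix : pderivUV (fun a b => Real.log (Real.sqrt |Kfun a b|)) u v
      = -2 / (u - v)^2 := by
    rw [pderivUV, pderivV, hEq.deriv_eq, hd.deriv]
  rw [hmix, sqrt_abs_K u v h, Kfun]
  field_simp
  ring
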